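/- Let D ≥ 2 be an integer and C ∈ (0,1]. Suppose P : ℕ → (0,1] satisfies P_0 = 1 and P_k ≥ (C/(8k))^{k} · ∏_{i=0}^{k-1} P_i^{D-1} for all k ≥ 1. Then P_k ≥ (C/(8k))^{k D^{k}} for all k ≥ 1; consequently, limsup_{k→∞} (1/k) · log(log(1/P_k))/log D ≤ 1. -/

import Mathlib

open Filter Topology

lemma exp_bound_aux (D : ℕ) (hD : 2 ≤ D) :
    ∀ k : ℕ, k + (D-1) * ∑ i ∈ Finset.range k, i * D^i ≤ k * D^k := by
  obtain ⟨d, rfl⟩ : ∃ d, D = d + 1 := ⟨D-1, by omega⟩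
  intro k
  induction k with
  | zero => simp
  | succ n ih =>
    rw [Finset.sum_range_succ, Nat.mul_add]
    have h1 : 1 ≤ (d+1) ^ (n+1) := Nat.one_le_pow _ _ (by omega)
    have h2 : (d+1)^(n+1) = (d+1)^n * (d+1) := pow_succ _ _
    simp only [Nat.add_sub_cancel] at ih ⊢
    nlinarith [ih, h1, h2]

theorem decay_of_tails_jsq_stmt7
    (D : ℕ) (hD : 2 ≤ D) (C : ℝ) (hC : C ∈ Set.Ioc (0:ℝ) 1)
    (P : ℕ → ℝ) (hP : ∀ k, P k ∈ Set.Ioc (0:ℝ) 1) (hP0 : P 0 = 1)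
    (hrec : ∀ k : ℕ, 1 ≤ k →
      (C / (8 * (k:ℝ))) ^ k * ∏ i ∈ Finset.range k, P i ^ (D - 1) ≤ P k) :
    (∀ k : ℕ, 1 ≤ k → (C / (8 * (k:ℝ))) ^ (k * D ^ k) ≤ P k) ∧
    ∀ ε : ℝ, 0 < ε → ∀ᶠ k : ℕ in Filter.atTop,
      (1 / (k:ℝ)) * (Real.log (Real.log (1 / P k)) / Real.log D) ≤ 1 + ε := by
  have hC0 : 0 < C := hC.1
  have main : ∀ k : ℕ, 1 ≤ k → (C / (8 * (k:ℝ))) ^ (k * D ^ k) ≤ P k := by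
    intro k
    induction k using Nat.strong_induction_on with
    | _ k ih =>
    intro hk1
    have hk0 : (0:ℝ) < k := by exact_mod_cast hk1
    set a := C / (8 * (k:ℝ)) with ha_def
    have ha0 : 0 < a := div_pos hC0 (by positivity)
    have hkR1 : (1:ℝ) ≤ k := by exact_mod_cast hk1
    have ha1 : a ≤ 1 := by
      rw [div_le_one (by positivity)]
      nlinarith [hC.2]
    have h1 : ∀ i ∈ Finset.range k, a ^ ((i * D^i) * (D-1)) ≤ P i ^ (D-1) := by
      intro i hi
      rcases Nat.eq_zero_or_pos i with rfl | hi1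
      · simp [hP0]
      · have hi0 : (0:ℝ) < i := by exact_mod_cast hi1
        have hik : (i:ℝ) ≤ k := by exact_mod_cast (Finset.mem_range.1 hi).le
        have hai : a ≤ C / (8 * (i:ℝ)) := by
          rw [ha_def]
          gcongr
        have hPi := ih i (Finset.mem_range.1 hi) hi1
        calc a ^ ((i * D^i) * (D-1)) = (a ^ (i * D^i)) ^ (D-1) := by rw [pow_mul]
          _ ≤ ((C / (8 * (i:ℝ))) ^ (i * D^i)) ^ (D-1) :=
              pow_le_pow_left₀ (pow_nonneg ha0.le _) (pow_le_pow_left₀ ha0.le hai _) _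
          _ ≤ P i ^ (D-1) := pow_le_pow_left₀ (by positivity) hPi _
    have h2 : a ^ (∑ i ∈ Finset.range k, (i * D^i) * (D-1))
        ≤ ∏ i ∈ Finset.range k, P i ^ (D-1) := by
      rw [← Finset.prod_pow_eq_pow_sum]
      exact Finset.prod_le_prod (fun i _ => pow_nonneg ha0.le _) h1
    have h3 : a ^ (k + ∑ i ∈ Finset.range k, (i * D^i) * (D-1)) ≤ P k := by
      rw [pow_add]
      calc a ^ k * a ^ (∑ i ∈ Finset.range k, (i * D^i) * (D-1))
          ≤ a ^ k * ∏ i ∈ Finset.range k, P i ^ (D-1) := by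
            apply mul_le_mul_of_nonneg_left h2 (pow_nonneg ha0.le _)
        _ ≤ P k := hrec k hk1
    have hexp : k + ∑ i ∈ Finset.range k, (i * D^i) * (D-1) ≤ k * D ^ k := by
      have := exp_bound_aux D hD k
      rw [Finset.mul_sum] at this
      simpa [mul_comm] using this
    exact le_trans (pow_le_pow_of_le_one ha0.le ha1 hexp) h3
  refine ⟨main, ?_⟩
  intro ε hε
  have hD0 : (1:ℝ) < D := by exact_mod_cast Nat.lt_of_lt_of_le one_lt_two hD
  have hL : 0 < Real.log D := Real.log_pos hD0
  set L := Real.log D with hL_def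
  set c : ℝ := Real.log 8 - Real.log C - 1 with hc_def
  -- tendsto fact
  have htend : Tendsto (fun k : ℕ => (2 * Real.log k + c) / k) atTop (𝓝 0) := by
    have heq : (fun k : ℕ => (2 * Real.log k + c) / (k:ℝ))
        = fun k : ℕ => 2 * (Real.log k / k) + c * (1 / k) := by
      funext k; ring
    rw [heq]
    have h1 : Tendsto (fun x : ℝ => Real.log x / x) atTop (𝓝 0) :=
      Real.isLittleO_log_id_atTop.tendsto_div_nhds_zero
    have h2 := h1.comp tendsto_natCast_atTop_atTop (α := ℕ)
    have h3 := tendsto_one_div_atTop_nhds_zero_nat (𝕜 := ℝ)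
    have := (h2.const_mul 2).add (h3.const_mul c)
    simpa using this
  have hev : ∀ᶠ k : ℕ in atTop, (2 * Real.log k + c) / k < ε * L :=
    htend.eventually_lt_const (by positivity)
  filter_upwards [hev, eventually_ge_atTop 1] with k hgk hk1
  have hk0 : (0:ℝ) < k := by exact_mod_cast hk1
  have hkR1 : (1:ℝ) ≤ k := by exact_mod_cast hk1
  set a := C / (8 * (k:ℝ)) with ha_def
  have ha0 : 0 < a := div_pos hC0 (by positivity)
  have hPk := hP k
  have hPk0 : 0 < P k := hPk.1
  -- log(1/P k) bound
  have hlog1 : 0 ≤ Real.log (1 / P k) :=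
    Real.log_nonneg (one_le_one_div hPk0 hPk.2)
  set n : ℕ := k * D ^ k with hn_def
  have hn1 : 1 ≤ n := Nat.one_le_iff_ne_zero.2 (by positivity)
  have hB1 : (1:ℝ) < Real.log (8 * k) - Real.log C := by
    have h8 : (1:ℝ) < Real.log (8 * k) := by
      rw [Real.lt_log_iff_exp_lt (by positivity)]
      nlinarith [Real.exp_one_lt_d9, hkR1]
    have hCle : Real.log C ≤ 0 := Real.log_nonpos hC0.le hC.2
    linarith
  set B : ℝ := (n:ℝ) * (Real.log (8 * k) - Real.log C) with hB_def
  have hnR1 : (1:ℝ) ≤ n := by exact_mod_cast hn1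
  have hBgt1 : (1:ℝ) < B := by
    rw [hB_def]; nlinarith [hnR1, hB1]
  have hlogP_le : Real.log (1 / P k) ≤ B := by
    have h1 : a ^ n ≤ P k := main k hk1
    have h2 : 1 / P k ≤ (1/a) ^ n := by
      rw [one_div_pow]
      exact one_div_le_one_div_of_le (pow_pos ha0 n) h1
    calc Real.log (1 / P k) ≤ Real.log ((1/a)^n) :=
          Real.log_le_log (by positivity) h2
      _ = n * Real.log (1/a) := by rw [Real.log_pow]
      _ = B := by
          rw [hB_def, ha_def, one_div_div, Real.log_div (by positivity) hC0.ne']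
  -- log log bound
  have hloglog : Real.log (Real.log (1 / P k)) ≤ Real.log B := by
    rcases le_or_gt (Real.log (1 / P k)) 1 with h | h
    · calc Real.log (Real.log (1 / P k)) ≤ 0 := Real.log_nonpos hlog1 h
        _ ≤ Real.log B := Real.log_nonneg hBgt1.le
    · exact Real.log_le_log (by linarith) hlogP_le
  have hlogB : Real.log B ≤ k * L + 2 * Real.log k + c := by
    have hpos1 : (0:ℝ) < (n:ℝ) := by linarith
    have hpos2 : (0:ℝ) < Real.log (8*k) - Real.log C := by linarith
    have e1 : Real.log B = Real.log n + Real.log (Real.log (8*k) - Real.log C) := by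
      rw [hB_def, Real.log_mul hpos1.ne' hpos2.ne']
    have e2 : Real.log (n:ℝ) = Real.log k + k * L := by
      rw [hn_def]
      push_cast
      rw [Real.log_mul hk0.ne' (by positivity), Real.log_pow]
    have e3 : Real.log (Real.log (8*k) - Real.log C)
        ≤ Real.log (8*k) - Real.log C - 1 :=
      Real.log_le_sub_one_of_pos hpos2
    have e4 : Real.log (8*k) = Real.log 8 + Real.log k :=
      Real.log_mul (by norm_num) hk0.ne'
    rw [e1, e2]
    linarith [e3, e4, hc_def]
  -- conclude
  have hfinal : Real.log (Real.log (1 / P k)) ≤ (1+ε) * (k * L) := by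
    have h2 : 2 * Real.log k + c < ε * L * k := by
      have := (div_lt_iff₀ hk0).1 hgk
      linarith
    nlinarith [hloglog, hlogB, h2]
  rw [one_div, ← div_eq_inv_mul, div_le_iff₀ hk0, div_le_iff₀ hL]
  calc Real.log (Real.log (1 / P k)) ≤ (1+ε) * (k * L) := hfinal
    _ = (1+ε) * k * L := by ring
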